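/- Let g ≥ 1 and let rec* : ℤ^{P({1,...,g})} → ℤ^{2g} be the map with rec*(ε_I) = Σ_{j ∉ I} φ_j + Σ_{j ∈ I} φ̄_j, and let N' = ker(rec*). Then ℤ^{P({1,...,g})} = M ⊕ N', where M is the subgroup generated by ε_∅, ε_{1}, ..., ε_{g}. In particular, the image of rec* is free of rank g + 1. -/

import Mathlib

/-- The map `rec* : ℤ^{P({1,...,g})} → ℤ^{2g}` sending the basis vector `ε_I` to
`Σ_{j ∉ I} φ_j + Σ_{j ∈ I} φ̄_j`, where `ℤ^{2g}` is realised as pairs of functions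
`Fin g → ℤ` (the first component recording the `φ_j`-coordinates and the second the
`φ̄_j`-coordinates). -/
noncomputable def recStar (g : ℕ) :
    (Finset (Fin g) →₀ ℤ) →ₗ[ℤ] ((Fin g → ℤ) × (Fin g → ℤ)) :=
  Finsupp.linearCombination ℤ fun I =>
    ((fun j => if j ∈ I then 0 else 1), fun j => if j ∈ I then 1 else 0)


section aux
variable (g : ℕ)

/-- index family for the generators of M -/
noncomputable def eFam : Option (Fin g) → (Finset (Fin g) →₀ ℤ) :=
  fun o => Finsupp.single (o.elim ∅ fun j => {j}) 1

lemma recStar_single (I : Finset (Fin g)) :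
    recStar g (Finsupp.single I 1) =
      ((fun j => if j ∈ I then 0 else 1), fun j => if j ∈ I then 1 else 0) := by
  simp [recStar, Finsupp.linearCombination_single]

lemma recStar_mI (I : Finset (Fin g)) :
    recStar g (Finsupp.single (∅ : Finset (Fin g)) 1 +
        ∑ j ∈ I, (Finsupp.single ({j} : Finset (Fin g)) 1 - Finsupp.single (∅ : Finset (Fin g)) 1)) =
      ((fun j => if j ∈ I then 0 else 1), fun j => if j ∈ I then 1 else 0) := by
  rw [map_add, map_sum]
  simp only [map_sub, recStar_single]
  refine Prod.ext ?_ ?_ <;> funext k <;>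
    simp only [Prod.fst_sum, Prod.snd_sum, Prod.fst_add, Prod.snd_add, Prod.fst_sub,
      Prod.snd_sub, Finset.sum_apply, Pi.add_apply, Pi.sub_apply, Finset.mem_singleton,
      Finset.notMem_empty, if_false] <;>
  · have hsum : ∀ a b : ℤ, (∑ x ∈ I, if k = x then a else b) =
        b * I.card + (if k ∈ I then a - b else 0) := by
      intro a b
      have : ∀ x ∈ I, (if k = x then a else b) = b + (if k = x then a - b else 0) := by
        intro x _; split <;> ring
      rw [Finset.sum_congr rfl this, Finset.sum_add_distrib, Finset.sum_const,
        Finset.sum_ite_eq I k fun _ => a - b]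
      simp [mul_comm]
    by_cases hk : k ∈ I <;> simp [hsum, hk]
end aux

/-- `ℤ^{P({1,...,g})} = M ⊕ N'`, where `M` is the subgroup generated by
`ε_∅, ε_{1}, ..., ε_{g}` and `N' = ker(rec*)`; in particular the image of `rec*` is free
of rank `g + 1`. -/


theorem stmt9 (g : ℕ) (hg : 1 ≤ g) :
    IsCompl
        (Submodule.span ℤ
          ({Finsupp.single (∅ : Finset (Fin g)) (1 : ℤ)} ∪
            Set.range fun j : Fin g => Finsupp.single ({j} : Finset (Fin g)) (1 : ℤ)))
        (LinearMap.ker (recStar g)) ∧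
      Module.Free ℤ ↥(LinearMap.range (recStar g)) ∧
      Module.finrank ℤ ↥(LinearMap.range (recStar g)) = g + 1 := by
  set f := recStar g with hf
  set S : Set (Finset (Fin g) →₀ ℤ) :=
    ({Finsupp.single (∅ : Finset (Fin g)) (1 : ℤ)} ∪
      Set.range fun j : Fin g => Finsupp.single ({j} : Finset (Fin g)) (1 : ℤ)) with hSdef
  have hS : S = Set.range (eFam g) := by
    ext x
    simp only [hSdef, Set.mem_union, Set.mem_singleton_iff, Set.mem_range, eFam]
    constructor
    · rintro (rfl | ⟨j, rfl⟩)
      · exact ⟨none, rfl⟩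
      · exact ⟨some j, rfl⟩
    · rintro ⟨(_ | j), rfl⟩
      · exact Or.inl rfl
      · exact Or.inr ⟨j, rfl⟩
  set M := Submodule.span ℤ S with hM
  -- each generator of range f is hit from M
  have hmI : ∀ I : Finset (Fin g),
      (Finsupp.single (∅ : Finset (Fin g)) (1:ℤ) +
        ∑ j ∈ I, (Finsupp.single ({j} : Finset (Fin g)) 1 - Finsupp.single (∅ : Finset (Fin g)) 1)) ∈ M := by
    intro I
    refine M.add_mem (Submodule.subset_span (Or.inl rfl)) (Submodule.sum_mem _ fun j _ => ?_)
    exact M.sub_mem (Submodule.subset_span (Or.inr ⟨j, rfl⟩))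
      (Submodule.subset_span (Or.inl rfl))
  have hr : LinearMap.range f ≤ Submodule.map f M := by
    rw [hf, recStar, Finsupp.range_linearCombination]
    refine Submodule.span_le.2 ?_
    rintro _ ⟨I, rfl⟩
    exact ⟨_, hmI I, recStar_mI g I⟩
  -- disjointness
  have hdisj : Disjoint M (LinearMap.ker f) := by
    rw [Submodule.disjoint_def]
    intro x hxM hxK
    rw [hM, hS] at hxM
    obtain ⟨c, hc⟩ := Finsupp.mem_span_range_iff_exists_finsupp.1 hxM
    have hfx : f x = 0 := hxK
    have hfe : ∀ o : Option (Fin g), f (eFam g o) =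
        ((fun j => if j ∈ (o.elim ∅ fun j => {j} : Finset (Fin g)) then 0 else 1),
          fun j => if j ∈ (o.elim ∅ fun j => {j} : Finset (Fin g)) then 1 else 0) := by
      intro o; exact recStar_single g _
    -- second coordinates give c (some j) = 0
    have hsome : ∀ j : Fin g, c (some j) = 0 := by
      intro j
      have h2 : (f x).2 j = c (some j) := by
        rw [← hc, map_finsuppSum]
        rw [Finsupp.sum, Prod.snd_sum, Finset.sum_apply]
        have : ∀ o ∈ c.support, (f (c o • eFam g o)).2 j =
            if o = some j then c o else 0 := by
          intro o _
          rw [map_smul, hfe o]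
          rcases o with _ | k
          · simp
          · by_cases hkj : k = j
            · subst hkj; simp
            · simp [Finset.mem_singleton, Ne.symm hkj, hkj]
        rw [Finset.sum_congr rfl this, Finset.sum_ite_eq' c.support (some j) fun o => c o]
        by_cases h : some j ∈ c.support
        · simp [h]
        · simp [h, Finsupp.notMem_support_iff.1 h]
      rw [hfx] at h2
      simpa using h2.symm
    -- hence c is supported on none
    have hcs : c = Finsupp.single none (c none) := by
      ext o
      rcases o with _ | j
      · simp
      · simp [hsome j, Finsupp.single_apply]
    have hx : x = c none • eFam g none := by
      rw [← hc, hcs, ← Finsupp.linearCombination_apply, Finsupp.linearCombination_single]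
      simp
    -- first coordinate at index 0 gives c none = 0
    have hnone : c none = 0 := by
      have h1 : (f x).1 ⟨0, hg⟩ = c none := by
        rw [hx, map_smul, hfe none]
        simp
      rw [hfx] at h1
      simpa using h1.symm
    rw [hx, hnone, zero_smul]
  -- codisjointness
  have hcodis : Codisjoint M (LinearMap.ker f) := by
    rw [codisjoint_iff_le_sup]
    intro x _
    obtain ⟨m, hmM, hfm⟩ := hr ⟨x, rfl⟩
    refine Submodule.mem_sup.2 ⟨m, hmM, x - m, ?_, by abel⟩
    rw [LinearMap.mem_ker, map_sub, hfm, sub_self]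
  have hcompl : IsCompl M (LinearMap.ker f) := ⟨hdisj, hcodis⟩
  -- the restriction of f to M is an isomorphism onto the range of f
  set φ : ↥M →ₗ[ℤ] ((Fin g → ℤ) × (Fin g → ℤ)) := f ∘ₗ M.subtype with hφ
  have hφinj : Function.Injective φ := by
    rw [← LinearMap.ker_eq_bot]
    refine LinearMap.ker_eq_bot'.2 fun m hm => ?_
    exact Subtype.ext (Submodule.disjoint_def.1 hdisj m.1 m.2 hm)
  have hφrange : LinearMap.range φ = LinearMap.range f := by
    rw [hφ, LinearMap.range_comp, Submodule.range_subtype]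
    refine le_antisymm ?_ hr
    rintro _ ⟨m, _, rfl⟩
    exact ⟨m, rfl⟩
  -- a basis of M indexed by Option (Fin g)
  have hιinj : Function.Injective (fun o : Option (Fin g) => o.elim ∅ fun j => ({j} : Finset (Fin g))) := by
    rintro (_ | a) (_ | b) h
    · rfl
    · exact absurd h.symm (Finset.singleton_ne_empty b)
    · exact absurd h (Finset.singleton_ne_empty a)
    · simpa using Finset.singleton_injective (by simpa using h)
  have hli : LinearIndependent ℤ (eFam g) := by
    have hb := (Finsupp.basisSingleOne (R := ℤ) (ι := Finset (Fin g))).linearIndependent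
    have heq : eFam g = (Finsupp.basisSingleOne (R := ℤ)) ∘
        fun o : Option (Fin g) => o.elim ∅ fun j => ({j} : Finset (Fin g)) := by
      funext o; simp [eFam]
    rw [heq]
    exact hb.comp _ hιinj
  have hMspan : M = Submodule.span ℤ (Set.range (eFam g)) := by rw [hM, hS]
  let b : Module.Basis (Option (Fin g)) ℤ ↥(Submodule.span ℤ (Set.range (eFam g))) := Module.Basis.span hli
  let eqv : ↥(Submodule.span ℤ (Set.range (eFam g))) ≃ₗ[ℤ] ↥(LinearMap.range f) :=
    ((LinearEquiv.ofEq _ _ hMspan.symm).trans (LinearEquiv.ofInjective φ hφinj)).trans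
      (LinearEquiv.ofEq _ _ hφrange)
  let bR : Module.Basis (Option (Fin g)) ℤ ↥(LinearMap.range f) := b.map eqv
  exact ⟨hcompl, Module.Free.of_basis bR,
    by rw [Module.finrank_eq_card_basis bR, Fintype.card_option, Fintype.card_fin]⟩
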